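/- (Lifting Theorem) If there is a derivation step Q ⟹_r Q₁ and Q' is a query more general than Q (i.e., Set(Q) ⊆ Set(Q')), then there exists a derivation step Q' ⟹_r Q₁' such that Q₁' is more general than Q₁. -/

import Mathlib

/- A semantic formalization of CLP(X) queries, clauses, derivation steps,
   filters and derivation-neutrality, following Payet & Mesnard. -/

namespace CLP

variable {V D Pr : Type}

/-- A (semantic) term: its evaluation under every valuation. -/
abbrev Trm (V D : Type) := (V → D) → D
/-- A (semantic) constraint: its truth value under every valuation. -/
abbrev Cns (V D : Type) := (V → D) → Prop

/-- The term consisting of a single variable. -/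
def varT (x : V) : Trm V D := fun v => v x

/-- An atom whose arguments are domain elements. -/
structure Atom (D Pr : Type) where
  pred : Pr
  args : List D

/-- A query ⟨p(t̃) | d⟩. -/
structure Query (V D Pr : Type) where
  pred : Pr
  args : List (Trm V D)
  constr : Cns V D

/-- The set of atoms described by a query: Set(⟨p(t̃) | d⟩) = {p([t̃]_v) | D ⊨_v d}. -/
def Query.descSet (Q : Query V D Pr) : Set (Atom D Pr) :=
  { A | ∃ v : V → D, Q.constr v ∧ A = ⟨Q.pred, Q.args.map (fun t => t v)⟩ }

/-- Applying a renaming (a bijection on variables) to a query. -/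
def Query.rename (γ : V ≃ V) (Q : Query V D Pr) : Query V D Pr :=
  ⟨Q.pred, Q.args.map (fun t v => t (v ∘ γ)), fun v => Q.constr (v ∘ γ)⟩

/-- A term only depends on (is supported by) the variables in `S`. -/
def Trm.supp (t : Trm V D) (S : Set V) : Prop :=
  ∀ v w : V → D, (∀ x ∈ S, v x = w x) → t v = t w

/-- A constraint only depends on (is supported by) the variables in `S`. -/
def Cns.supp (c : Cns V D) (S : Set V) : Prop :=
  ∀ v w : V → D, (∀ x ∈ S, v x = w x) → (c v ↔ c w)

/-- All the variables of the query lie in `S`. -/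
def Query.suppBy (Q : Query V D Pr) (S : Set V) : Prop :=
  (∀ t ∈ Q.args, Trm.supp t S) ∧ Cns.supp Q.constr S

/-- The query has finitely many variables (as every syntactic query does). -/
def Query.finSupp (Q : Query V D Pr) : Prop := ∃ S : Finset V, Q.suppBy ↑S

/-- The constraint s̃ = t̃ (componentwise equality of two sequences of terms). -/
def EqArgs (a b : List (Trm V D)) (v : V → D) : Prop :=
  a.length = b.length ∧ ∀ pr ∈ a.zip b, pr.1 v = pr.2 v

/-- A binary clause H ← c ◇ B. -/
structure Clause (V D Pr : Type) where
  hpred : Pr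
  hargs : List (Trm V D)
  constr : Cns V D
  bpred : Pr
  bargs : List (Trm V D)

/-- The query ⟨H | c⟩. -/
def Clause.headQuery (r : Clause V D Pr) : Query V D Pr := ⟨r.hpred, r.hargs, r.constr⟩
/-- The query ⟨B | c⟩. -/
def Clause.bodyQuery (r : Clause V D Pr) : Query V D Pr := ⟨r.bpred, r.bargs, r.constr⟩

/-- Applying a renaming to a clause (producing a variant of the clause). -/
def Clause.rename (γ : V ≃ V) (r : Clause V D Pr) : Clause V D Pr :=
  ⟨r.hpred, r.hargs.map (fun t v => t (v ∘ γ)), fun v => r.constr (v ∘ γ),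
   r.bpred, r.bargs.map (fun t v => t (v ∘ γ))⟩

/-- All the variables of the clause lie in `S`. -/
def Clause.suppBy (r : Clause V D Pr) (S : Set V) : Prop :=
  (∀ t ∈ r.hargs ++ r.bargs, Trm.supp t S) ∧ Cns.supp r.constr S

/-- The clause has finitely many variables. -/
def Clause.finSupp (r : Clause V D Pr) : Prop := ∃ S : Finset V, r.suppBy ↑S

/-- The constraint s̃ = ũ ∧ c ∧ d of the derived query, where the input clause is
    r' = p(s̃) ← c ◇ q(t̃) and the current query is Q = ⟨p(ũ) | d⟩. -/
def stepCns (r' : Clause V D Pr) (Q : Query V D Pr) : Cns V D :=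
  fun v => EqArgs r'.hargs Q.args v ∧ r'.constr v ∧ Q.constr v

/-- A derivation step Q ⟹_r Q₁: there is a variant r' of r variable-disjoint from Q
    (the input clause) such that the constraint s̃ = ũ ∧ c ∧ d is satisfiable, and
    Q₁ = ⟨q(t̃) | s̃ = ũ ∧ c ∧ d⟩. -/
def Step (r : Clause V D Pr) (Q Q₁ : Query V D Pr) : Prop :=
  ∃ γ : V ≃ V, ∃ S S' : Set V,
    Q.suppBy S ∧ (r.rename γ).suppBy S' ∧ Disjoint S S' ∧
    Q.pred = r.hpred ∧
    (∃ v, stepCns (r.rename γ) Q v) ∧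
    Q₁ = ⟨(r.rename γ).bpred, (r.rename γ).bargs, stepCns (r.rename γ) Q⟩

/-- Q₀ loops w.r.t. the program `Prog`: there is an infinite derivation of Prog ∪ {Q₀}. -/
def Loops (Prog : Set (Clause V D Pr)) (Q₀ : Query V D Pr) : Prop :=
  ∃ Qs : ℕ → Query V D Pr, Qs 0 = Q₀ ∧ ∀ n, ∃ r ∈ Prog, Step r (Qs n) (Qs (n + 1))

/-- Projection of a sequence onto a set of (0-based) positions, in increasing order. -/
def projArgs {α : Type} (s : Finset ℕ) (l : List α) : List α :=
  ((s.filter (· < l.length)).sort (· ≤ ·)).filterMap (fun i => l[i]?)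

/-- Projection of a query on a set of positions τ. -/
def Query.proj (τ : Pr → Finset ℕ) (Q : Query V D Pr) : Query V D Pr :=
  ⟨Q.pred, projArgs (τ Q.pred) Q.args, Q.constr⟩

/-- Projection of a query on the complementary set of positions τ̄. -/
def Query.coproj (τ : Pr → Finset ℕ) (Q : Query V D Pr) : Query V D Pr :=
  ⟨Q.pred, projArgs (Finset.range Q.args.length \ τ Q.pred) Q.args, Q.constr⟩

/-- A filter Δ = (τ, δ): a set of positions together with, for each predicate,
    a query over the projected predicate whose constraint is satisfiable. -/
structure PFilter (V D Pr : Type) where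
  pos : Pr → Finset ℕ
  delta : Pr → Query V D Pr
  delta_pred : ∀ p, (delta p).pred = p
  delta_sat : ∀ p, ∃ v, (delta p).constr v

/-- Q satisfies Δ when Set(Q|_τ) ⊆ Set(δ(rel(Q))). -/
def PFilter.Satisfies (Δ : PFilter V D Pr) (Q : Query V D Pr) : Prop :=
  (Q.proj Δ.pos).descSet ⊆ (Δ.delta Q.pred).descSet

/-- Q' is Δ-more general than Q. -/
def PFilter.MoreGen (Δ : PFilter V D Pr) (Q' Q : Query V D Pr) : Prop :=
  (Q.coproj Δ.pos).descSet ⊆ (Q'.coproj Δ.pos).descSet ∧ Δ.Satisfies Q'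

/-- Δ is derivation neutral (DN) for the clause r. -/
def PFilter.DN (Δ : PFilter V D Pr) (r : Clause V D Pr) : Prop :=
  ∀ Q Q₁ : Query V D Pr, Q.finSupp → Step r Q Q₁ →
    Δ.Satisfies Q₁ ∧
    ∀ Q' : Query V D Pr, Q'.finSupp → Δ.MoreGen Q' Q →
      ∃ Q₁', Step r Q' Q₁' ∧ Δ.MoreGen Q₁' Q₁

/-- sat(ũ, Q): taking a fresh variant of Q and existentially quantifying its variables,
    the values of ũ can be matched with the arguments of Q while its constraint holds. -/
def satC (us : List (Trm V D)) (Q : Query V D Pr) : Cns V D :=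
  fun v => ∃ w : V → D, us.length = Q.args.length ∧
    (∀ pr ∈ us.zip Q.args, pr.1 v = pr.2 w) ∧ Q.constr w

/-- First DNlog condition: D ⊨ c → ∀_{X̃|τ(p)} [sat(X̃|τ(p), δ(p)) → ∃_𝒴 c],
    with 𝒴 = Ỹ|τ(q) ∪ local_vars(r). -/
def DNlog1 (Δ : PFilter V D Pr) (p q : Pr) (Xs Ys : List V) (L : Set V) (c : Cns V D) : Prop :=
  ∀ v : V → D, c v →
    ∀ v' : V → D, (∀ x : V, x ∉ projArgs (Δ.pos p) Xs → v' x = v x) →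
      satC ((projArgs (Δ.pos p) Xs).map varT) (Δ.delta p) v' →
      ∃ w : V → D, (∀ x : V, x ∉ projArgs (Δ.pos q) Ys → x ∉ L → w x = v' x) ∧ c w

/-- Second DNlog condition: D ⊨ c → sat(Ỹ|τ(q), δ(q)). -/
def DNlog2 (Δ : PFilter V D Pr) (q : Pr) (Ys : List V) (c : Cns V D) : Prop :=
  ∀ v : V → D, c v → satC ((projArgs (Δ.pos q) Ys).map varT) (Δ.delta q) v

/-- Δ is DNlog for the clause p(X̃) ← c ◇ q(Ỹ) with local variables L. -/
def DNlog (Δ : PFilter V D Pr) (p q : Pr) (Xs Ys : List V) (L : Set V) (c : Cns V D) : Prop :=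
  DNlog1 Δ p q Xs Ys L c ∧ DNlog2 Δ q Ys c

end CLP

namespace CLP

lemma rename_suppBy {V D Pr : Type} (r : Clause V D Pr) (γ : V ≃ V) (S : Set V)
    (h : r.suppBy S) : (r.rename γ).suppBy (γ '' S) := by
  obtain ⟨hargs, hc⟩ := h
  constructor
  · intro t ht
    simp only [Clause.rename, ← List.map_append] at ht
    obtain ⟨t0, ht0, rfl⟩ := List.mem_map.1 ht
    intro v w hvw
    exact hargs t0 ht0 _ _ (fun x hx => hvw (γ x) ⟨x, hx, rfl⟩)
  · intro v w hvw
    exact hc _ _ (fun x hx => hvw (γ x) ⟨x, hx, rfl⟩)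

end CLP

theorem lifting {D Pr : Type} (r : CLP.Clause ℕ D Pr) (hr : r.finSupp)
    (Q Q₁ Q' : CLP.Query ℕ D Pr) (hQ' : Q'.finSupp)
    (hstep : CLP.Step r Q Q₁) (hmg : Q.descSet ⊆ Q'.descSet) :
    ∃ Q₁', CLP.Step r Q' Q₁' ∧ Q₁.descSet ⊆ Q₁'.descSet := by
  classical
  obtain ⟨T, hTargs, hTc⟩ := hr
  obtain ⟨T', hT'args, hT'c⟩ := hQ'
  obtain ⟨γ, S, S', hQS, hrS', hdisjold, hpredQ, ⟨v0, hv0⟩, hQ1⟩ := hstep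
  set M : ℕ := (T ∪ T').sup id + 1 with hMdef
  have hMT : ∀ y ∈ T, y < M := fun y hy =>
    Nat.lt_succ_of_le (Finset.le_sup (f := id) (Finset.mem_union_left _ hy))
  have hMT' : ∀ y ∈ T', y < M := fun y hy =>
    Nat.lt_succ_of_le (Finset.le_sup (f := id) (Finset.mem_union_right _ hy))
  set f : ℕ → ℕ := fun x => if x ∈ T then x + M else if M ≤ x ∧ x - M ∈ T then x - M else x
    with hfdef
  have hfT : ∀ y ∈ T, f y = y + M := fun y hy => by simp [hfdef, hy]
  have hinv : Function.Involutive f := by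
    intro x
    by_cases hx : x ∈ T
    · have h1 : f x = x + M := hfT x hx
      rw [h1]
      have hnot : x + M ∉ T := fun h => absurd (hMT _ h) (by omega)
      simp [hfdef, hnot, hx, Nat.le_add_left]
    · by_cases hx2 : M ≤ x ∧ x - M ∈ T
      · have h1 : f x = x - M := by simp [hfdef, hx, hx2]
        rw [h1, hfT _ hx2.2]
        omega
      · simp [hfdef, hx, hx2]
  set γ' : ℕ ≃ ℕ := hinv.toPerm with hγ'def
  have hγ'app : ∀ x, γ' x = f x := fun _ => rfl
  -- disjointness of supports
  have hnotimg : ∀ x ∈ T', x ∉ γ' '' (↑T : Set ℕ) := by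
    intro x hx ⟨y, hy, hxy⟩
    rw [hγ'app, hfT y hy] at hxy
    have := hMT' x hx
    omega
  have hdisj : Disjoint (↑T' : Set ℕ) (γ' '' ↑T) :=
    Set.disjoint_left.2 hnotimg
  -- predicate and length facts from hmg applied at v0
  have hQmem : (⟨Q.pred, Q.args.map (fun t => t v0)⟩ : CLP.Atom D Pr) ∈ Q.descSet :=
    ⟨v0, hv0.2.2, rfl⟩
  obtain ⟨w0, hw0, heq0⟩ := hmg hQmem
  rw [CLP.Atom.mk.injEq] at heq0
  have hpred' : Q'.pred = r.hpred := heq0.1.symm.trans hpredQ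
  -- key construction
  have key : ∀ v : ℕ → D, CLP.stepCns (r.rename γ) Q v →
      ∃ u, CLP.stepCns (r.rename γ') Q' u ∧ ∀ t ∈ r.bargs, t (u ∘ γ') = t (v ∘ γ) := by
    intro v hv
    obtain ⟨⟨hlen, hzip⟩, hcγ, hQc⟩ := hv
    obtain ⟨w, hwc, heqA⟩ := hmg ⟨v, hQc, rfl⟩
    rw [CLP.Atom.mk.injEq] at heqA
    have hargsvw : Q.args.map (fun t => t v) = Q'.args.map (fun t => t w) := heqA.2
    set u : ℕ → D := fun x => if x ∈ T.image f then v (γ (f x)) else w x with hudef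
    have hA : ∀ x ∈ (↑T : Set ℕ), (u ∘ γ') x = (v ∘ γ) x := by
      intro y hy
      have hmem : f y ∈ T.image f := Finset.mem_image_of_mem f hy
      simp only [Function.comp, hγ'app, hudef, hmem, if_pos, hinv y]
    have hB : ∀ x ∈ (↑T' : Set ℕ), u x = w x := by
      intro x hx
      have : x ∉ T.image f := by
        intro hmem
        obtain ⟨y, hy, hxy⟩ := Finset.mem_image.1 hmem
        rw [hfT y hy] at hxy
        have := hMT' x hx
        omega
      show (if x ∈ T.image f then v (γ (f x)) else w x) = w x
      rw [if_neg this]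
    have hbargs : ∀ t ∈ r.bargs, t (u ∘ γ') = t (v ∘ γ) := by
      intro t ht
      exact hTargs t (List.mem_append.2 (Or.inr ht)) _ _ hA
    refine ⟨u, ⟨⟨?_, ?_⟩, ?_, ?_⟩, hbargs⟩
    · -- lengths
      have h1 : r.hargs.length = Q.args.length := by
        simpa [CLP.Clause.rename] using hlen
      have h2 : Q.args.length = Q'.args.length := by
        have := congrArg List.length hargsvw
        simpa using this
      simp [CLP.Clause.rename, h1, h2]
    · -- pointwise equality
      intro pr hpr
      obtain ⟨i, hi, hpri⟩ := List.mem_iff_getElem.1 hpr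
      have hi1 : i < ((r.rename γ').hargs).length := by
        simpa using (lt_of_lt_of_le hi (by simp [List.length_zip]))
      have hi2 : i < Q'.args.length := by
        simpa using (lt_of_lt_of_le hi (by simp [List.length_zip]))
      have hiH : i < r.hargs.length := by simpa [CLP.Clause.rename] using hi1
      have hiQ : i < Q.args.length := by
        have h2 : Q.args.length = Q'.args.length := by
          have := congrArg List.length hargsvw
          simpa using this
        omega
      rw [List.getElem_zip] at hpri
      subst hpri
      simp only [CLP.Clause.rename, List.getElem_map]
      erw [List.getElem_map]
      -- r.hargs[i] (u ∘ γ') = Q'.args[i] u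
      have s1 : r.hargs[i] (u ∘ γ') = r.hargs[i] (v ∘ γ) :=
        hTargs _ (List.mem_append.2 (Or.inl (List.getElem_mem hiH))) _ _ hA
      have s2 : r.hargs[i] (v ∘ γ) = (Q.args[i]'hiQ) v := by
        have hmem : (((r.rename γ).hargs).zip Q.args)[i]'(by
            simp [List.length_zip, CLP.Clause.rename]; omega) ∈
            ((r.rename γ).hargs).zip Q.args := List.getElem_mem _
        have := hzip _ hmem
        simpa [List.getElem_zip, CLP.Clause.rename, List.getElem_map] using this
      have s3 : (Q.args[i]'hiQ) v = (Q'.args[i]'hi2) w := by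
        have := congrArg (fun l => l[i]?) hargsvw
        simpa [List.getElem?_map, List.getElem?_eq_getElem, hiQ, hi2] using this
      have s4 : (Q'.args[i]'hi2) w = (Q'.args[i]'hi2) u :=
        (hT'args _ (List.getElem_mem hi2) _ _ hB).symm
      rw [s1, s2, s3, s4]
    · -- clause constraint
      show r.constr (u ∘ γ')
      exact (hTc _ _ hA).2 hcγ
    · -- Q' constraint
      exact (hT'c _ _ hB).2 hwc
  obtain ⟨u0, hu0, _⟩ := key v0 hv0
  refine ⟨⟨(r.rename γ').bpred, (r.rename γ').bargs, CLP.stepCns (r.rename γ') Q'⟩,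
    ⟨γ', ↑T', γ' '' ↑T, ⟨hT'args, hT'c⟩,
      CLP.rename_suppBy r γ' ↑T ⟨hTargs, hTc⟩, hdisj, hpred', ⟨u0, hu0⟩, rfl⟩, ?_⟩
  intro A hA
  rw [hQ1] at hA
  obtain ⟨v, hv, rfl⟩ := hA
  obtain ⟨u, hu, hbeq⟩ := key v hv
  refine ⟨u, hu, ?_⟩
  simp only [CLP.Atom.mk.injEq, CLP.Clause.rename, List.map_map]
  exact ⟨trivial, (List.map_congr_left (fun t ht => (hbeq t ht).symm))⟩
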